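/- Let k, n be nonnegative integers with k ≤ p·n and 0 < p < 1 with q = 1 - p. Then B_{n,k}(p)/b_{n,k}(p) ≤ U(n,k,p) < 2·L(n,k,p), where the first inequality is an equality if and only if k = 0. Moreover U(n,k,p) ≤ 1 + 2·√(q·(k+p)). -/
import Mathlib

open Real

set_option linter.unusedSectionVars false
set_option maxHeartbeats 1000000

/-- Binomial probability `b_{n,k}(p)`. -/
noncomputable def b (n k : ℕ) (p : ℝ) : ℝ :=
  (n.choose k : ℝ) * p ^ k * (1 - p) ^ (n - k)

/-- Lower tail probability `B_{n,k}(p)`. -/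
noncomputable def B (n k : ℕ) (p : ℝ) : ℝ :=
  ∑ j ∈ Finset.range (k + 1), (n.choose j : ℝ) * p ^ j * (1 - p) ^ (n - j)

noncomputable def L (n k p : ℝ) : ℝ :=
  (k + 1 - p * n + Real.sqrt ((p * n - k + 1) ^ 2 + 4 * (1 - p) * k)) / 2

noncomputable def V (n k p a : ℝ) : ℝ :=
  a + p * (n - k + a + 1) / (p * n + p - k + a)

noncomputable def U (n k p : ℝ) : ℝ := ⨅ a : ℕ, V n k p (a : ℝ)

lemma b_pos' {n k : ℕ} {p : ℝ} (hkn : k ≤ n) (hp0 : 0 < p) (hp1 : p < 1) : 0 < b n k p := by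
  have h1 : 0 < (n.choose k : ℝ) := by exact_mod_cast Nat.choose_pos hkn
  have h2 : 0 < p ^ k := pow_pos hp0 _
  have h3 : 0 < (1 - p) ^ (n - k) := pow_pos (by linarith) _
  exact mul_pos (mul_pos h1 h2) h3

lemma b_succ_id {n j : ℕ} {p : ℝ} (hjn : j < n) :
    b n j p * (((n : ℝ) - j) * p) = b n (j+1) p * (((j : ℝ) + 1) * (1 - p)) := by
  have hid : (n.choose (j+1) : ℝ) * (j+1) = (n.choose j : ℝ) * ((n : ℝ) - j) := by
    have h2 : ((n.choose (j+1) * (j+1) : ℕ) : ℝ) = ((n.choose j * (n - j) : ℕ) : ℝ) := by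
      exact_mod_cast congrArg (Nat.cast (R := ℝ)) (Nat.choose_succ_right_eq n j)
    push_cast [Nat.cast_sub hjn.le] at h2
    linarith
  have hsub : n - j = (n - (j+1)) + 1 := by omega
  rw [b, b, hsub, pow_succ, pow_succ]
  linear_combination (-(p^(j+1)) * (1-p)^(n-(j+1)) * (1-p)) * hid

lemma B_eq (n k : ℕ) (p : ℝ) : B n k p = ∑ j ∈ Finset.range (k + 1), b n j p := rfl

section
variable {n k : ℕ} {p : ℝ} (hp0 : 0 < p) (hp1 : p < 1) (hk : (k : ℝ) ≤ p * n)
include hp0 hp1 hk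

lemma k_le_n : k ≤ n := by
  have : (k : ℝ) ≤ n := le_trans hk (by nlinarith [Nat.cast_nonneg (α := ℝ) n])
  exact_mod_cast this

lemma k_lt_n (hk1 : 1 ≤ k) : k < n := by
  have h1 : (1 : ℝ) ≤ k := by exact_mod_cast hk1
  have : (k : ℝ) < n := by nlinarith
  exact_mod_cast this

lemma b_le_succ {j : ℕ} (hj : j < k) : b n j p ≤ b n (j+1) p := by
  have hkn : k < n := k_lt_n hp0 hp1 hk (by omega)
  have hjn : j < n := by omega
  have hid := b_succ_id (p := p) hjn
  have hb1 : 0 < b n (j+1) p := b_pos' (by omega) hp0 hp1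
  have hb0 : 0 < b n j p := b_pos' (by omega) hp0 hp1
  have hj1 : (j : ℝ) + 1 ≤ k := by exact_mod_cast hj
  have hnj : 0 < ((n : ℝ) - j) * p := by
    have : (j : ℝ) < n := by exact_mod_cast hjn
    nlinarith
  have hcmp : ((j : ℝ) + 1) * (1 - p) ≤ ((n : ℝ) - j) * p := by nlinarith
  nlinarith [mul_le_mul_of_nonneg_left hcmp hb1.le]

lemma b_mono {i j : ℕ} (hij : i ≤ j) (hj : j ≤ k) : b n i p ≤ b n j p := by
  induction j, hij using Nat.le_induction with
  | base => exact le_refl _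
  | succ m him ih =>
      exact le_trans (ih (by omega)) (b_le_succ hp0 hp1 hk (by omega))

lemma b_geo_step {M : ℕ} (hM1 : 1 ≤ M) (hMk : M ≤ k) {i : ℕ} (hi : i + 1 ≤ M) :
    b n i p ≤ ((M : ℝ) * (1 - p) / (((n : ℝ) - M + 1) * p)) * b n (i+1) p := by
  have hkn : k < n := k_lt_n hp0 hp1 hk (by omega)
  have hjn : i < n := by omega
  have hid := b_succ_id (p := p) hjn
  have hb1 : 0 < b n (i+1) p := b_pos' (by omega) hp0 hp1
  have hb0 : 0 < b n i p := b_pos' (by omega) hp0 hp1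
  have hMn : (M : ℝ) ≤ n := by exact_mod_cast (by omega : M ≤ n)
  have hiM : (i : ℝ) + 1 ≤ M := by exact_mod_cast hi
  have hden : 0 < ((n : ℝ) - M + 1) * p := by nlinarith
  have hni : 0 < ((n : ℝ) - i) * p := by
    have : (i : ℝ) < n := by exact_mod_cast hjn
    nlinarith
  rw [mul_comm ((M : ℝ) * (1 - p) / (((n : ℝ) - M + 1) * p)) _, mul_div_assoc', le_div_iff₀ hden]
  have h1 : b n i p * (((n : ℝ) - M + 1) * p) ≤ b n i p * (((n : ℝ) - i) * p) := by
    apply mul_le_mul_of_nonneg_left _ hb0.le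
    nlinarith
  have h2 : b n (i+1) p * (((i : ℝ) + 1) * (1 - p)) ≤ b n (i+1) p * ((M : ℝ) * (1 - p)) := by
    apply mul_le_mul_of_nonneg_left _ hb1.le
    nlinarith
  calc b n i p * (((n : ℝ) - M + 1) * p) ≤ b n i p * (((n : ℝ) - i) * p) := h1
    _ = b n (i+1) p * (((i : ℝ) + 1) * (1 - p)) := hid
    _ ≤ b n (i+1) p * ((M : ℝ) * (1 - p)) := h2

lemma b_geo {M : ℕ} (hM1 : 1 ≤ M) (hMk : M ≤ k) {m : ℕ} (hm : m ≤ M) :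
    b n (M - m) p ≤ ((M : ℝ) * (1 - p) / (((n : ℝ) - M + 1) * p)) ^ m * b n M p := by
  set r := (M : ℝ) * (1 - p) / (((n : ℝ) - M + 1) * p) with hr
  have hr0 : 0 ≤ r := by
    have hMn : (M : ℝ) ≤ n := by
      exact_mod_cast (by have := k_le_n hp0 hp1 hk; omega : M ≤ n)
    apply div_nonneg <;> nlinarith
  induction m with
  | zero => simp
  | succ m ih =>
      have hmM : m ≤ M := by omega
      have hstep : b n (M - (m+1)) p ≤ r * b n (M - m) p := by
        have h1 : (M - (m+1)) + 1 = M - m := by omega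
        have := b_geo_step hp0 hp1 hk hM1 hMk (i := M - (m+1)) (by omega)
        rwa [h1] at this
      calc b n (M - (m+1)) p ≤ r * b n (M - m) p := hstep
        _ ≤ r * (r ^ m * b n M p) := mul_le_mul_of_nonneg_left (ih hmM) hr0
        _ = r ^ (m+1) * b n M p := by ring

lemma Vden_pos (a : ℕ) : 0 < p * n + p - k + a := by
  have := (Nat.cast_nonneg (α := ℝ) a); linarith

lemma V_gt (a : ℕ) : (a : ℝ) < V n k p (a : ℝ) := by
  have hden := Vden_pos hp0 hp1 hk a
  have hkn : (k : ℝ) ≤ n := by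
    have := k_le_n hp0 hp1 hk; exact_mod_cast this
  have hnum : 0 < p * ((n : ℝ) - k + a + 1) := by
    have := (Nat.cast_nonneg (α := ℝ) a); nlinarith
  have : 0 < p * ((n : ℝ) - k + a + 1) / (p * n + p - k + a) := div_pos hnum hden
  unfold V; linarith

/-- For `a ≥ k`: `k + 1 ≤ V a`. -/
lemma V_ge_k1 {a : ℕ} (ha : k ≤ a) : (k : ℝ) + 1 ≤ V n k p (a : ℝ) := by
  have hden := Vden_pos hp0 hp1 hk a
  have hkn : (k : ℝ) ≤ n := by
    have := k_le_n hp0 hp1 hk; exact_mod_cast this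
  have hka : (k : ℝ) ≤ a := by exact_mod_cast ha
  rw [V, ← sub_le_iff_le_add', le_div_iff₀ hden]
  have key : 0 ≤ ((a : ℝ) - k) * (p * n + 2*p - 1 - k + a) := by
    rcases Nat.eq_or_lt_of_le ha with h | h
    · simp [h]
    · have h1 : (k : ℝ) + 1 ≤ a := by exact_mod_cast h
      have ha1 : (1 : ℝ) ≤ a := by
        have : (1:ℕ) ≤ a := by omega
        exact_mod_cast this
      nlinarith
  nlinarith [key]

lemma b0_lt_bk (hk1 : 1 ≤ k) : b n 0 p < b n k p := by
  have hkn : k < n := k_lt_n hp0 hp1 hk hk1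
  have h01 : b n 0 p < b n 1 p := by
    have hid := b_succ_id (n := n) (j := 0) (p := p) (by omega)
    have hb1 : 0 < b n 1 p := b_pos' (by omega) hp0 hp1
    have hq : (1 : ℝ) - p < p * n := by
      have h1 : (1 : ℝ) ≤ k := by exact_mod_cast hk1
      linarith
    have hn : (0:ℝ) < n := by
      have : (0:ℕ) < n := by omega
      exact_mod_cast this
    push_cast at hid
    nlinarith [b_pos' (n := n) (k := 0) (by omega) hp0 hp1]
  exact lt_of_lt_of_le h01 (b_mono hp0 hp1 hk hk1 le_rfl)

lemma key_lt (hk1 : 1 ≤ k) (a : ℕ) : B n k p < b n k p * V n k p (a : ℝ) := by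
  have hkn : k ≤ n := k_le_n hp0 hp1 hk
  have hbk : 0 < b n k p := b_pos' hkn hp0 hp1
  rcases le_or_gt k a with hak | hak
  · have hBlt : B n k p < ((k : ℝ) + 1) * b n k p := by
      rw [B_eq]
      have h := Finset.sum_lt_sum (s := Finset.range (k+1))
        (f := fun j => b n j p) (g := fun _ => b n k p)
        (by intro j hj
            exact b_mono hp0 hp1 hk (by simpa using Nat.lt_succ_iff.mp (Finset.mem_range.mp hj)) le_rfl)
        ⟨0, Finset.mem_range.mpr (by omega), b0_lt_bk hp0 hp1 hk hk1⟩
      simpa [mul_comm] using h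
    have hV := V_ge_k1 hp0 hp1 hk hak
    calc B n k p < ((k : ℝ) + 1) * b n k p := hBlt
      _ ≤ V n k p (a : ℝ) * b n k p := by
          apply mul_le_mul_of_nonneg_right hV hbk.le
      _ = b n k p * V n k p (a : ℝ) := by ring
  · set M := k - a with hM
    have hM1 : 1 ≤ M := by omega
    have hMk : M ≤ k := by omega
    have hMcast : (M : ℝ) = (k : ℝ) - a := by
      push_cast [hM, Nat.cast_sub hak.le]; ring
    have hMn : (M : ℝ) ≤ n := by
      have : (M:ℕ) ≤ n := by omega
      exact_mod_cast this
    set r := (M : ℝ) * (1 - p) / (((n : ℝ) - M + 1) * p) with hr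
    have hden : 0 < ((n : ℝ) - M + 1) * p := by nlinarith
    have hM1R : (1:ℝ) ≤ M := by exact_mod_cast hM1
    have hr0 : 0 < r := div_pos (by nlinarith) hden
    have hr1 : r < 1 := by
      rw [hr, div_lt_one hden]
      have hMle : (M : ℝ) ≤ p * n := by
        have : (M:ℝ) ≤ k := by exact_mod_cast hMk
        linarith
      nlinarith
    have hbM : 0 < b n M p := b_pos' (by omega) hp0 hp1
    have S1 : ∑ j ∈ Finset.range M, b n j p ≤ ∑ j ∈ Finset.range M, r ^ (M - j) * b n M p := by
      apply Finset.sum_le_sum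
      intro j hj
      have hjM : j < M := Finset.mem_range.mp hj
      have := b_geo hp0 hp1 hk hM1 hMk (m := M - j) (by omega)
      have hMM : M - (M - j) = j := by omega
      rwa [hMM] at this
    have S2 : ∑ j ∈ Finset.range M, r ^ (M - j) = r * ∑ m ∈ Finset.range M, r ^ m := by
      rw [Finset.mul_sum]
      rw [← Finset.sum_range_reflect (fun m => r * r ^ m) M]
      apply Finset.sum_congr rfl
      intro j hj
      have hjM : j < M := Finset.mem_range.mp hj
      rw [← pow_succ']
      congr 1
      omega
    have S3 : ∑ m ∈ Finset.range M, r ^ m < 1 / (1 - r) := by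
      have hgeom : ∑ m ∈ Finset.range M, r ^ m = (1 - r ^ M) / (1 - r) := by
        rw [geom_sum_eq (ne_of_lt hr1), div_eq_div_iff (by nlinarith) (by nlinarith)]
        ring
      rw [hgeom, div_lt_div_iff₀ (by linarith) (by linarith)]
      nlinarith [pow_pos hr0 M]
    have Sfin : ∑ j ∈ Finset.range M, b n j p < b n k p * (r / (1 - r)) := by
      calc ∑ j ∈ Finset.range M, b n j p ≤ (r * ∑ m ∈ Finset.range M, r ^ m) * b n M p := by
            rw [← S2]
            simpa [Finset.sum_mul] using S1
        _ < (r * (1 / (1-r))) * b n M p := by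
            apply mul_lt_mul_of_pos_right _ hbM
            exact mul_lt_mul_of_pos_left S3 hr0
        _ ≤ (r * (1 / (1-r))) * b n k p := by
            apply mul_le_mul_of_nonneg_left (b_mono hp0 hp1 hk hMk le_rfl)
            have : 0 < 1 / (1 - r) := by rw [one_div]; exact inv_pos.mpr (by linarith)
            nlinarith
        _ = b n k p * (r / (1 - r)) := by ring
    have S4 : ∑ j ∈ Finset.Ico M (k+1), b n j p ≤ ((a : ℝ) + 1) * b n k p := by
      have h := Finset.sum_le_card_nsmul (Finset.Ico M (k+1)) (fun j => b n j p) (b n k p)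
        (by intro j hj
            have := Finset.mem_Ico.mp hj
            exact b_mono hp0 hp1 hk (by omega) le_rfl)
      rw [Nat.card_Ico] at h
      have hcard : k + 1 - M = a + 1 := by omega
      rw [hcard] at h
      simpa [nsmul_eq_mul, add_comm] using h
    have hsplit : B n k p = ∑ j ∈ Finset.range M, b n j p + ∑ j ∈ Finset.Ico M (k+1), b n j p := by
      rw [B_eq, Finset.range_eq_Ico, ← Finset.sum_Ico_consecutive _ (Nat.zero_le M) (by omega),
        ← Finset.range_eq_Ico]
    have hD0 : 0 < p * (n : ℝ) + p - k + a := by nlinarith [Nat.cast_nonneg (α := ℝ) a]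
    have h1r : 1 - r = (p * (n:ℝ) + p - k + a) / (((n : ℝ) - M + 1) * p) := by
      rw [hr, one_sub_div hden.ne']
      congr 1
      rw [hMcast]; ring
    have hrr : r / (1 - r) = (M : ℝ) * (1 - p) / (p * (n:ℝ) + p - k + a) := by
      rw [h1r, hr]
      rw [div_div_div_cancel_right₀]
      exact hden.ne'
    have hnum : p * ((n:ℝ) - k + a + 1) = (p * (n:ℝ) + p - k + a) + (M:ℝ)*(1-p) := by
      rw [hMcast]; ring
    have hVid : V n k p (a : ℝ) = (a : ℝ) + 1 + r / (1 - r) := by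
      rw [V, hrr, hnum, add_div, div_self hD0.ne']
      ring
    rw [hsplit, hVid]
    have hexp : b n k p * ((a:ℝ) + 1 + r / (1-r)) = b n k p * (r / (1-r)) + ((a:ℝ)+1) * b n k p := by ring
    rw [hexp]
    linarith [Sfin, S4]

lemma key_le (a : ℕ) : B n k p ≤ b n k p * V n k p (a : ℝ) := by
  rcases Nat.eq_zero_or_pos k with h0 | h1
  · subst h0
    push_cast
    have hB : B n 0 p = b n 0 p := by rw [B_eq, Finset.sum_range_one]
    have hb0 : 0 < b n 0 p := b_pos' (Nat.zero_le n) hp0 hp1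
    have hV1 : (1:ℝ) ≤ V n 0 p (a : ℝ) := by
      rcases Nat.eq_zero_or_pos a with ha | ha
      · subst ha
        have hden : p * (n:ℝ) + p ≠ 0 := by positivity
        rw [V]
        push_cast
        rw [show p * ((n:ℝ) - 0 + 0 + 1) = p * (n:ℝ) + p by ring,
          show p * (n:ℝ) + p - 0 + 0 = p * (n:ℝ) + p by ring, div_self hden]
        norm_num
      · have hgt := V_gt hp0 hp1 hk a
        push_cast at hgt
        have : (1:ℝ) ≤ a := by exact_mod_cast ha
        linarith
    rw [hB]
    nlinarith
  · exact (key_lt hp0 hp1 hk h1 a).le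

lemma V_bddBelow : BddBelow (Set.range fun a : ℕ => V n k p (a : ℝ)) := by
  refine ⟨0, ?_⟩
  rintro x ⟨a, rfl⟩
  exact le_of_lt (lt_of_le_of_lt (Nat.cast_nonneg a) (V_gt hp0 hp1 hk a))

lemma exists_Vmin : ∃ a0 : ℕ, ∀ a : ℕ, V n k p (a0 : ℝ) ≤ V n k p (a : ℝ) := by
  set N := ⌈V (n:ℝ) (k:ℝ) p ((0:ℕ):ℝ)⌉₊ with hN
  obtain ⟨a0, ha0, hmin⟩ := Finset.exists_min_image (Finset.range (N+1))
    (fun a : ℕ => V n k p (a : ℝ)) ⟨0, Finset.mem_range.mpr (by omega)⟩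
  refine ⟨a0, fun a => ?_⟩
  rcases le_or_gt a N with h | h
  · exact hmin a (Finset.mem_range.mpr (by omega))
  · have h0 : V n k p ((0:ℕ):ℝ) ≤ (N : ℝ) := Nat.le_ceil _
    have h2 : (N:ℝ) < (a:ℝ) := by exact_mod_cast h
    have h3 := V_gt hp0 hp1 hk a
    have h4 : V n k p ((a0:ℕ):ℝ) ≤ V n k p ((0:ℕ):ℝ) := hmin 0 (Finset.mem_range.mpr (by omega))
    linarith

/-- quadratic criterion for upper bounds on `V`. -/
lemma V_le_target {a : ℕ} {m : ℝ}
    (h : (p*(n:ℝ)+p-(k:ℝ)+(a:ℝ))^2 + p*(1-p)*((n:ℝ)+1) ≤ m * (p*(n:ℝ)+p-(k:ℝ)+(a:ℝ))) :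
    V n k p (a : ℝ) ≤ ((k:ℝ) - p*(n:ℝ)) + m := by
  have ht : 0 < p*(n:ℝ)+p-(k:ℝ)+(a:ℝ) := Vden_pos hp0 hp1 hk a
  have hexp : V n k p (a : ℝ) = (a:ℝ) + p + p*(1-p)*((n:ℝ)+1) / (p*(n:ℝ)+p-(k:ℝ)+(a:ℝ)) := by
    rw [V, show p * ((n:ℝ) - k + a + 1)
        = p*(p*(n:ℝ)+p-(k:ℝ)+(a:ℝ)) + p*(1-p)*((n:ℝ)+1) by ring,
      add_div, mul_div_assoc, div_self ht.ne', mul_one]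
    ring
  have hdiv : p*(1-p)*((n:ℝ)+1) / (p*(n:ℝ)+p-(k:ℝ)+(a:ℝ)) ≤ m - (p*(n:ℝ)+p-(k:ℝ)+(a:ℝ)) := by
    rw [div_le_iff₀ ht]; nlinarith
  rw [hexp]; linarith

lemma V_lt_target {a : ℕ} {m : ℝ}
    (h : (p*(n:ℝ)+p-(k:ℝ)+(a:ℝ))^2 + p*(1-p)*((n:ℝ)+1) < m * (p*(n:ℝ)+p-(k:ℝ)+(a:ℝ))) :
    V n k p (a : ℝ) < ((k:ℝ) - p*(n:ℝ)) + m := by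
  have ht : 0 < p*(n:ℝ)+p-(k:ℝ)+(a:ℝ) := Vden_pos hp0 hp1 hk a
  have hexp : V n k p (a : ℝ) = (a:ℝ) + p + p*(1-p)*((n:ℝ)+1) / (p*(n:ℝ)+p-(k:ℝ)+(a:ℝ)) := by
    rw [V, show p * ((n:ℝ) - k + a + 1)
        = p*(p*(n:ℝ)+p-(k:ℝ)+(a:ℝ)) + p*(1-p)*((n:ℝ)+1) by ring,
      add_div, mul_div_assoc, div_self ht.ne', mul_one]
    ring
  have hdiv : p*(1-p)*((n:ℝ)+1) / (p*(n:ℝ)+p-(k:ℝ)+(a:ℝ)) < m - (p*(n:ℝ)+p-(k:ℝ)+(a:ℝ)) := by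
    rw [div_lt_iff₀ ht]; nlinarith
  rw [hexp]; linarith

end
lemma U_le_sqrt_bound {n k : ℕ} {p : ℝ} (hp0 : 0 < p) (hp1 : p < 1) (hk : (k:ℝ) ≤ p*n) :
    U (n:ℝ) (k:ℝ) p ≤ 1 + 2 * Real.sqrt ((1 - p) * ((k:ℝ) + p)) := by
  have hbdd := V_bddBelow hp0 hp1 hk
  have hkR : (0:ℝ) ≤ k := Nat.cast_nonneg k
  obtain ⟨s, hs_def⟩ : ∃ s : ℝ, s = p*n - k := ⟨_, rfl⟩
  have hs : 0 ≤ s := by rw [hs_def]; linarith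
  obtain ⟨w, hw_def⟩ : ∃ w : ℝ, w = Real.sqrt ((1-p)*((k:ℝ)+p)) := ⟨_, rfl⟩
  have hw0 : 0 ≤ w := hw_def ▸ Real.sqrt_nonneg _
  have harg : 0 ≤ (1-p)*((k:ℝ)+p) := by nlinarith
  have hw2 : w^2 = (1-p)*((k:ℝ)+p) := by rw [hw_def]; exact Real.sq_sqrt harg
  have hc : p*(1-p)*((n:ℝ)+1) = w^2 + (1-p)*s := by rw [hw2, hs_def]; ring
  have main : ∃ a : ℕ, V (n:ℝ) (k:ℝ) p (a:ℝ) ≤ 1 + 2*w := by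
    rcases le_or_gt w (p + s) with hcase | hcase
    · refine ⟨0, ?_⟩
      have ht : p*(n:ℝ)+p-(k:ℝ)+((0:ℕ):ℝ) = s + p := by rw [hs_def]; push_cast; ring
      have hineq : (p*(n:ℝ)+p-(k:ℝ)+((0:ℕ):ℝ))^2 + p*(1-p)*((n:ℝ)+1)
          ≤ (1+s+2*w) * (p*(n:ℝ)+p-(k:ℝ)+((0:ℕ):ℝ)) := by
        rw [ht, hc]
        nlinarith [mul_le_mul_of_nonneg_left hcase hw0]
      have h := V_le_target hp0 hp1 hk (a := 0) (m := 1 + s + 2*w) hineq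
      have heq : (k:ℝ) - p*(n:ℝ) + (1+s+2*w) = 1 + 2*w := by rw [hs_def]; ring
      rw [heq] at h
      exact h
    · obtain ⟨D, hD_def⟩ : ∃ D : ℝ, D = (1+s+2*w)^2 - 4*(w^2 + (1-p)*s) := ⟨_, rfl⟩
      have hD1 : 1 ≤ D := by
        rw [hD_def]
        nlinarith [mul_nonneg hs (by linarith : (0:ℝ) ≤ w - (p+s)), hs, hw0, hp0.le]
      have hD0 : 0 ≤ D := by linarith
      obtain ⟨rD, hrD_def⟩ : ∃ rD : ℝ, rD = Real.sqrt D := ⟨_, rfl⟩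
      have hrD2 : rD^2 = D := by rw [hrD_def]; exact Real.sq_sqrt hD0
      have hrD0 : 0 ≤ rD := hrD_def ▸ Real.sqrt_nonneg _
      have hrD1 : 1 ≤ rD := by
        have h1 := Real.sqrt_le_sqrt hD1
        rw [Real.sqrt_one] at h1
        rw [hrD_def]; exact h1
      obtain ⟨x, hx_def⟩ : ∃ x : ℝ, x = (1+s+2*w-rD)/2 - (s+p) := ⟨_, rfl⟩
      refine ⟨⌈x⌉₊, ?_⟩
      have hax : x ≤ (⌈x⌉₊ : ℝ) := Nat.le_ceil x
      have ht : p*(n:ℝ)+p-(k:ℝ)+((⌈x⌉₊:ℕ):ℝ) = s+p+((⌈x⌉₊:ℕ):ℝ) := by rw [hs_def]; ring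
      have htup : s+p+((⌈x⌉₊:ℕ):ℝ) ≤ (1+s+2*w-rD)/2 + rD := by
        rcases le_or_gt x 0 with hx0 | hx0
        · rw [Nat.ceil_eq_zero.mpr hx0]
          push_cast
          linarith
        · have h5 := Nat.ceil_lt_add_one hx0.le
          linarith
      have hQ : (s+p+((⌈x⌉₊:ℕ):ℝ))^2 + (w^2+(1-p)*s) ≤ (1+s+2*w)*(s+p+((⌈x⌉₊:ℕ):ℝ)) := by
        have hprod : ((s+p+((⌈x⌉₊:ℕ):ℝ)) - (1+s+2*w-rD)/2)
            * ((s+p+((⌈x⌉₊:ℕ):ℝ)) - ((1+s+2*w-rD)/2 + rD)) ≤ 0 :=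
          mul_nonpos_of_nonneg_of_nonpos (by linarith) (by linarith)
        nlinarith [hprod, hrD2, hD_def]
      have hineq : (p*(n:ℝ)+p-(k:ℝ)+((⌈x⌉₊:ℕ):ℝ))^2 + p*(1-p)*((n:ℝ)+1)
          ≤ (1+s+2*w) * (p*(n:ℝ)+p-(k:ℝ)+((⌈x⌉₊:ℕ):ℝ)) := by
        rw [ht, hc]; exact hQ
      have h := V_le_target hp0 hp1 hk (a := ⌈x⌉₊) (m := 1+s+2*w) hineq
      have heq : (k:ℝ) - p*(n:ℝ) + (1+s+2*w) = 1 + 2*w := by rw [hs_def]; ring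
      rw [heq] at h
      exact h
  obtain ⟨a, ha⟩ := main
  rw [← hw_def, U]
  exact le_trans (ciInf_le hbdd a) ha

lemma U_lt_2L {n k : ℕ} {p : ℝ} (hp0 : 0 < p) (hp1 : p < 1) (hk : (k:ℝ) ≤ p*n) :
    U (n:ℝ) (k:ℝ) p < 2 * L (n:ℝ) (k:ℝ) p := by
  have hbdd := V_bddBelow hp0 hp1 hk
  have hkR : (0:ℝ) ≤ k := Nat.cast_nonneg k
  obtain ⟨s, hs_def⟩ : ∃ s : ℝ, s = p*n - k := ⟨_, rfl⟩
  have hs : 0 ≤ s := by rw [hs_def]; linarith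
  obtain ⟨E, hE_def⟩ : ∃ E : ℝ,
      E = Real.sqrt ((p*(n:ℝ) - (k:ℝ) + 1)^2 + 4*(1-p)*(k:ℝ)) := ⟨_, rfl⟩
  have hargE : 0 ≤ (p*(n:ℝ)-(k:ℝ)+1)^2 + 4*(1-p)*(k:ℝ) := by
    nlinarith [sq_nonneg (p*(n:ℝ)-(k:ℝ)+1)]
  have hE2 : E^2 = (p*(n:ℝ)-(k:ℝ)+1)^2 + 4*(1-p)*(k:ℝ) := by
    rw [hE_def]; exact Real.sq_sqrt hargE
  have hE0 : 0 ≤ E := hE_def ▸ Real.sqrt_nonneg _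
  have hE1 : s + 1 ≤ E := by nlinarith [hE2, hE0, hs, hkR, hs_def]
  have h2L : 2 * L (n:ℝ) (k:ℝ) p = 1 - s + E := by
    rw [L, ← hE_def, hs_def]; ring
  obtain ⟨D, hD_def⟩ : ∃ D : ℝ, D = (1+E)^2 - 4*(p*(1-p)*((n:ℝ)+1)) := ⟨_, rfl⟩
  have hD3 : 3 + s^2 ≤ D := by
    rw [hD_def]
    nlinarith [hE1, hE2, sq_nonneg (1-2*p), mul_nonneg hp0.le hs, hs, hs_def]
  have hD0 : 0 ≤ D := by nlinarith [sq_nonneg s]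
  obtain ⟨rD, hrD_def⟩ : ∃ rD : ℝ, rD = Real.sqrt D := ⟨_, rfl⟩
  have hrD2 : rD^2 = D := by rw [hrD_def]; exact Real.sq_sqrt hD0
  have hrD0 : 0 ≤ rD := hrD_def ▸ Real.sqrt_nonneg _
  have hrD1 : 1 < rD := by nlinarith [sq_nonneg s]
  have hrDs : s < rD := by nlinarith
  obtain ⟨x, hx_def⟩ : ∃ x : ℝ, x = (1+E-rD)/2 - (s+p) := ⟨_, rfl⟩
  have main : ∃ a : ℕ, V (n:ℝ) (k:ℝ) p (a:ℝ) < 1 - s + E := by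
    have key : ∀ a : ℕ, (1+E-rD)/2 < s+p+(a:ℝ) → s+p+(a:ℝ) < (1+E-rD)/2 + rD →
        V (n:ℝ) (k:ℝ) p (a:ℝ) < 1 - s + E := by
      intro a hlow hhigh
      have ht : p*(n:ℝ)+p-(k:ℝ)+(a:ℝ) = s+p+(a:ℝ) := by rw [hs_def]; ring
      have hprod : ((s+p+(a:ℝ)) - (1+E-rD)/2) * ((s+p+(a:ℝ)) - ((1+E-rD)/2 + rD)) < 0 :=
        mul_neg_of_pos_of_neg (by linarith) (by linarith)
      have hineq : (p*(n:ℝ)+p-(k:ℝ)+(a:ℝ))^2 + p*(1-p)*((n:ℝ)+1)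
          < (1+E) * (p*(n:ℝ)+p-(k:ℝ)+(a:ℝ)) := by
        rw [ht]
        nlinarith [hprod, hrD2, hD_def]
      have h := V_lt_target hp0 hp1 hk (a := a) (m := 1+E) hineq
      have heq : (k:ℝ) - p*(n:ℝ) + (1+E) = 1 - s + E := by rw [hs_def]; ring
      rwa [heq] at h
    rcases lt_or_ge x 0 with hx0 | hx0
    · refine ⟨0, key 0 ?_ ?_⟩
      · push_cast; linarith
      · push_cast; linarith
    · refine ⟨⌊x⌋₊ + 1, key _ ?_ ?_⟩
      · have h5 := Nat.lt_floor_add_one x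
        push_cast
        push_cast at h5
        linarith
      · have h5 := Nat.floor_le hx0
        push_cast
        linarith
  obtain ⟨a, ha⟩ := main
  rw [U, h2L]
  exact lt_of_le_of_lt (ciInf_le hbdd a) ha

lemma U_k0 {n : ℕ} {p : ℝ} (hp0 : 0 < p) (hp1 : p < 1) : U (n:ℝ) ((0:ℕ):ℝ) p = 1 := by
  have hk : ((0:ℕ):ℝ) ≤ p * n := by
    push_cast
    exact mul_nonneg hp0.le (Nat.cast_nonneg n)
  have hden : p * (n:ℝ) + p ≠ 0 := by
    have : 0 < p * (n:ℝ) + p := by nlinarith [Nat.cast_nonneg (α := ℝ) n]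
    exact this.ne'
  have hV0 : V (n:ℝ) ((0:ℕ):ℝ) p ((0:ℕ):ℝ) = 1 := by
    rw [V]
    push_cast
    rw [show p * ((n:ℝ) - 0 + 0 + 1) = p*(n:ℝ)+p by ring,
      show p*(n:ℝ)+p-0+0 = p*(n:ℝ)+p by ring, div_self hden]
    norm_num
  apply le_antisymm
  · rw [U]
    exact le_trans (ciInf_le (V_bddBelow hp0 hp1 hk) 0) (le_of_eq hV0)
  · rw [U]
    apply le_ciInf
    intro a
    rcases Nat.eq_zero_or_pos a with ha | ha
    · subst ha; exact le_of_eq hV0.symm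
    · have hgt := V_gt hp0 hp1 hk a
      have h1 : (1:ℝ) ≤ a := by exact_mod_cast ha
      linarith

theorem binomial_ratio_upper_bound
    (k n : ℕ) (p : ℝ) (hp0 : 0 < p) (hp1 : p < 1) (hk : (k : ℝ) ≤ p * n) :
    (B n k p / b n k p ≤ U n k p ∧ U n k p < 2 * L n k p) ∧
    (B n k p / b n k p = U n k p ↔ k = 0) ∧
    U n k p ≤ 1 + 2 * Real.sqrt ((1 - p) * ((k : ℝ) + p)) := by
  have hkn := k_le_n hp0 hp1 hk
  have hb : 0 < b n k p := b_pos' hkn hp0 hp1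
  have hbdd := V_bddBelow hp0 hp1 hk
  have hratio_le : B n k p / b n k p ≤ U (n:ℝ) (k:ℝ) p := by
    rw [U]
    apply le_ciInf
    intro a
    rw [div_le_iff₀ hb, mul_comm]
    exact key_le hp0 hp1 hk a
  refine ⟨⟨hratio_le, U_lt_2L hp0 hp1 hk⟩, ⟨?_, ?_⟩, U_le_sqrt_bound hp0 hp1 hk⟩
  · intro heq
    by_contra hk0
    have hk1 : 1 ≤ k := Nat.one_le_iff_ne_zero.mpr hk0
    obtain ⟨a0, ha0⟩ := exists_Vmin hp0 hp1 hk
    have h1 : B n k p / b n k p < V (n:ℝ) (k:ℝ) p (a0:ℝ) := by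
      rw [div_lt_iff₀ hb, mul_comm]
      exact key_lt hp0 hp1 hk hk1 a0
    have h2 : V (n:ℝ) (k:ℝ) p (a0:ℝ) ≤ U (n:ℝ) (k:ℝ) p := by
      rw [U]
      exact le_ciInf ha0
    rw [heq] at h1
    linarith
  · intro hk0
    subst hk0
    have hB : B n 0 p = b n 0 p := by rw [B_eq, Finset.sum_range_one]
    rw [hB, div_self hb.ne', U_k0 hp0 hp1]
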